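/- Let β = (β₀,β₁,β₂,β₃) ∈ ℂ⁴. The polynomial λ² − t divides N_β(λ,t) in ℂ[λ,t] if and only if β₀ = β₁ and β₂ = β₃. -/
import Mathlib


open MvPolynomial

/-- The polynomial `N_β(λ,t)` in `ℂ[λ,t]`, where `λ = X 0` and `t = X 1`. -/
noncomputable def Nbeta (β : Fin 4 → ℂ) : MvPolynomial (Fin 2) ℂ :=
  C (β 0) * (X 0) ^ 2 * (X 0 - 1) ^ 2 * (X 0 - X 1) ^ 2
    - C (β 1) * X 1 * (X 0 - 1) ^ 2 * (X 0 - X 1) ^ 2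
    + C (β 2) * (X 1 - 1) * (X 0) ^ 2 * (X 0 - X 1) ^ 2
    - C (β 3) * X 1 * (X 1 - 1) * (X 0) ^ 2 * (X 0 - 1) ^ 2

theorem stmt16 (β : Fin 4 → ℂ) :
    ((X 0) ^ 2 - X 1) ∣ Nbeta β ↔ β 0 = β 1 ∧ β 2 = β 3 := by
  constructor
  · rintro ⟨q, hq⟩
    set φ : MvPolynomial (Fin 2) ℂ →ₐ[ℂ] Polynomial ℂ :=
      aeval (fun i : Fin 2 => if i = 0 then (Polynomial.X : Polynomial ℂ) else Polynomial.X ^ 2)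
      with hφdef
    have h0 : φ (Nbeta β) = 0 := by
      rw [hq, map_mul]
      have : φ ((X 0) ^ 2 - X 1) = 0 := by simp [hφdef]
      rw [this, zero_mul]
    have hcomp : φ (Nbeta β) =
        Polynomial.X ^ 4 * (Polynomial.X - 1) ^ 3 *
          ((Polynomial.C (β 0) - Polynomial.C (β 1)) * (Polynomial.X - 1)
            + (Polynomial.C (β 2) - Polynomial.C (β 3)) * (Polynomial.X + 1)) := by
      simp only [Nbeta, map_sub, map_add, map_mul, map_pow, map_one, hφdef, aeval_X,
        aeval_C, Polynomial.algebraMap_eq, if_pos, if_neg]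
      norm_num
      ring
    rw [hcomp] at h0
    have hne : (Polynomial.X ^ 4 * (Polynomial.X - 1) ^ 3 : Polynomial ℂ) ≠ 0 := by
      intro h
      have := congrArg (Polynomial.eval 2) h
      simp at this
      norm_num at this
    have hfac : ((Polynomial.C (β 0) - Polynomial.C (β 1)) * (Polynomial.X - 1)
        + (Polynomial.C (β 2) - Polynomial.C (β 3)) * (Polynomial.X + 1) : Polynomial ℂ) = 0 := by
      rcases mul_eq_zero.mp h0 with h | h
      · exact absurd h hne
      · exact h
    constructor
    · have := congrArg (Polynomial.eval (-1)) hfac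
      simp at this
      rcases this with h | h
      · exact sub_eq_zero.mp h
      · norm_num at h
    · have := congrArg (Polynomial.eval 1) hfac
      simp at this
      exact sub_eq_zero.mp this
  · rintro ⟨h1, h2⟩
    refine ⟨C (β 0) * (X 0 - 1) ^ 2 * (X 0 - X 1) ^ 2
      - C (β 2) * (X 1 - 1) ^ 2 * (X 0) ^ 2, ?_⟩
    rw [Nbeta, ← h1, ← h2]
    ring
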